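/- Eggleton's bound cannot be attained twice in a row in the Ulam sequence: there is no n such that both a_{n+1} = a_n + a_{n-2} and a_{n+2} = a_{n+1} + a_{n-1}. -/
import Mathlib


/-- `m` has exactly one representation as `a i + a j` with `1 ≤ i < j ≤ n`. -/
def UlamUniqueRep (a : ℕ → ℕ) (n m : ℕ) : Prop :=
  ∃! p : ℕ × ℕ, 1 ≤ p.1 ∧ p.1 < p.2 ∧ p.2 ≤ n ∧ a p.1 + a p.2 = m

/-- `a` (indexed from 1) is the Ulam sequence: `a 1 = 1`, `a 2 = 2`, and for `n ≥ 2`,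
`a (n+1)` is the least integer exceeding `a n` uniquely representable as the sum of
two distinct earlier terms. -/
def IsUlamSeq (a : ℕ → ℕ) : Prop :=
  a 1 = 1 ∧ a 2 = 2 ∧
    ∀ n, 2 ≤ n → IsLeast {m | a n < m ∧ UlamUniqueRep a n m} (a (n + 1))

lemma ulam_succ_lt (a : ℕ → ℕ) (ha : IsUlamSeq a) : ∀ k, 1 ≤ k → a k < a (k + 1) := by
  intro k hk
  rcases eq_or_lt_of_le hk with h | h
  · subst h; rw [ha.1]; rw [ha.2.1]; norm_num
  · exact (ha.2.2 k (by omega)).1.1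

lemma ulam_mono (a : ℕ → ℕ) (ha : IsUlamSeq a) :
    ∀ i j, 1 ≤ i → i < j → a i < a j := by
  intro i j hi hij
  obtain ⟨d, rfl⟩ : ∃ d, j = i + 1 + d := ⟨j - (i + 1), by omega⟩
  clear hij
  induction d with
  | zero => exact ulam_succ_lt a ha i hi
  | succ d ih => exact lt_trans ih (ulam_succ_lt a ha (i + 1 + d) (by omega))

lemma ulam_le (a : ℕ → ℕ) (ha : IsUlamSeq a) :
    ∀ i j, 1 ≤ i → i ≤ j → a i ≤ a j := by
  intro i j hi hij
  rcases eq_or_lt_of_le hij with h | h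
  · subst h; exact le_rfl
  · exact le_of_lt (ulam_mono a ha i j hi h)

lemma ulam_inj (a : ℕ → ℕ) (ha : IsUlamSeq a) {i j : ℕ}
    (hi : 1 ≤ i) (hj : 1 ≤ j) (h : a i = a j) : i = j := by
  rcases lt_trichotomy i j with hlt | heq | hgt
  · exact absurd h (ne_of_lt (ulam_mono a ha i j hi hlt))
  · exact heq
  · exact absurd h.symm (ne_of_lt (ulam_mono a ha j i hj hgt))

lemma ulam_pos (a : ℕ → ℕ) (ha : IsUlamSeq a) : ∀ k, 1 ≤ k → 1 ≤ a k := by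
  intro k hk
  have h1 := ha.1
  have := ulam_le a ha 1 k le_rfl hk
  omega

/-- Eggleton's bound: `a (t+4) ≤ a (t+3) + a (t+1)`. -/
lemma ulam_eggleton (a : ℕ → ℕ) (ha : IsUlamSeq a) (t : ℕ) :
    a (t + 4) ≤ a (t + 3) + a (t + 1) := by
  have hpos : 1 ≤ a (t + 1) := ulam_pos a ha (t + 1) (by omega)
  have hlb := (ha.2.2 (t + 3) (by omega)).2
  have hmem : a (t + 3) + a (t + 1) ∈ {m | a (t + 3) < m ∧ UlamUniqueRep a (t + 3) m} := by
    constructor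
    · omega
    · refine ⟨(t + 1, t + 3), ⟨(show (1:ℕ) ≤ t + 1 by omega), (show t + 1 < t + 3 by omega),
        le_rfl, (show a (t + 1) + a (t + 3) = a (t + 3) + a (t + 1) by omega)⟩, ?_⟩
      rintro ⟨i, j⟩ ⟨hi, hij, hj, hsum⟩
      simp only at hi hij hj hsum ⊢
      have hj3 : j = t + 3 := by
        by_contra hne
        have hj2 : j ≤ t + 2 := by omega
        have hbi : a i ≤ a (t + 1) := ulam_le a ha i (t + 1) hi (by omega)
        have hbj : a j ≤ a (t + 2) := ulam_le a ha j (t + 2) (by omega) hj2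
        have : a (t + 2) < a (t + 3) := ulam_mono a ha (t + 2) (t + 3) (by omega) (by omega)
        omega
      subst hj3
      have hai : a i = a (t + 1) := by omega
      have : i = t + 1 := ulam_inj a ha hi (by omega) hai
      subst this
      rfl
  exact hlb hmem

lemma ulam_a3 (a : ℕ → ℕ) (ha : IsUlamSeq a) : a 3 = 3 := by
  have hl := ha.2.2 2 le_rfl
  have hmem : (3 : ℕ) ∈ {m | a 2 < m ∧ UlamUniqueRep a 2 m} := by
    constructor
    · rw [ha.2.1]; norm_num
    · refine ⟨(1, 2), ⟨le_rfl, by omega, le_rfl, by rw [ha.1, ha.2.1]⟩, ?_⟩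
      rintro ⟨i, j⟩ ⟨hi, hij, hj, _⟩
      simp only at hi hij hj ⊢
      have : i = 1 := by omega
      have : j = 2 := by omega
      simp_all
  have h1 := hl.1.1
  have h2 := hl.2 hmem
  have hr : a (2 + 1) = a 3 := rfl
  rw [ha.2.1] at h1
  omega

/-- Eggleton's bound cannot be attained twice in a row. -/
theorem ulam_eggleton_not_twice (a : ℕ → ℕ) (ha : IsUlamSeq a) :
    ¬ ∃ n, 4 ≤ n ∧ a (n + 1) = a n + a (n - 2) ∧ a (n + 2) = a (n + 1) + a (n - 1) := by
  rintro ⟨n, hn, h1, h2⟩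
  obtain ⟨k, rfl⟩ : ∃ k, n = k + 4 := ⟨n - 4, by omega⟩
  have e2 : k + 4 - 2 = k + 2 := by omega
  have e1 : k + 4 - 1 = k + 3 := by omega
  rw [e2] at h1
  rw [e1] at h2
  have h1' : a (k + 5) = a (k + 4) + a (k + 2) := h1
  have h2' : a (k + 6) = a (k + 5) + a (k + 3) := h2
  have hpos : 1 ≤ a (k + 2) := ulam_pos a ha (k + 2) (by omega)
  have h23 : a (k + 2) < a (k + 3) := ulam_mono a ha (k + 2) (k + 3) (by omega) (by omega)
  set M := a (k + 5) + a (k + 2) with hM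
  have hM1 : a (k + 5) < M := by omega
  have hM2 : M < a (k + 6) := by omega
  have hnot : ¬ UlamUniqueRep a (k + 5) M := by
    intro hu
    have hle := (ha.2.2 (k + 5) (by omega)).2 ⟨hM1, hu⟩
    have hr : a (k + 5 + 1) = a (k + 6) := rfl
    omega
  have h2nd : ∃ q : ℕ × ℕ, (1 ≤ q.1 ∧ q.1 < q.2 ∧ q.2 ≤ k + 5 ∧ a q.1 + a q.2 = M) ∧
      q ≠ (k + 2, k + 5) := by
    by_contra hq
    push_neg at hq
    exact hnot ⟨(k + 2, k + 5), ⟨(show 1 ≤ k + 2 by omega), (show k + 2 < k + 5 by omega),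
      le_rfl, (show a (k + 2) + a (k + 5) = M by omega)⟩, fun q hq' => hq q hq'⟩
  obtain ⟨⟨i, j⟩, ⟨hi, hij, hj, hsum⟩, hne⟩ := h2nd
  simp only at hi hij hj hsum hne
  have hjle : j ≤ k + 4 := by
    by_contra hc
    have hj5 : j = k + 5 := by omega
    subst hj5
    have hai : a i = a (k + 2) := by omega
    have : i = k + 2 := ulam_inj a ha hi (by omega) hai
    subst this
    exact hne rfl
  have hbi : a i ≤ a (k + 3) := ulam_le a ha i (k + 3) hi (by omega)
  have hbj : a j ≤ a (k + 4) := ulam_le a ha j (k + 4) (by omega) hjle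
  -- M = a(k+4) + 2*a(k+2) ≤ a(k+3) + a(k+4), hence 2*a(k+2) ≤ a(k+3)
  have hkey : 2 * a (k + 2) ≤ a (k + 3) := by omega
  rcases Nat.eq_zero_or_pos k with rfl | hk
  · have h3 := ulam_a3 a ha
    have h22 := ha.2.1
    simp only [Nat.zero_add] at hkey
    omega
  · obtain ⟨t, rfl⟩ : ∃ t, k = t + 1 := ⟨k - 1, by omega⟩
    have hegg := ulam_eggleton a ha t
    have hr1 : a (t + 1 + 2) = a (t + 3) := rfl
    have hr2 : a (t + 1 + 3) = a (t + 4) := rfl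
    have hkk : a (t + 1) < a (t + 3) := ulam_mono a ha (t + 1) (t + 3) (by omega) (by omega)
    -- hegg : a (t+4) ≤ a (t+3) + a (t+1); hkey : 2*a(t+3) ≤ a(t+4)
    omega
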